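/- Let $n > r > k \ge 2$, let $1/n < \delta < 1$, and let $G$ be a $k$-uniform hypergraph on $n$ vertices with $\delta_{k-1}(G) \ge (1-\delta)n$. Then for any edge $e \in E(G)$, the number $\kappa_e^{(r)}$ of copies of $K_r^{(k)}$ containing $e$ satisfies $k_{r-k} - \frac{2k\delta n^{r-k}}{(r-k)!}\binom{r}{k-1} \le \kappa_e^{(r)} \le k_{r-k}$, where $k_{r-k}$ is the number of copies of $K_{r-k}^{(k)}$ in $G$ (interpreted as $\binom{n}{r-k}$ if $r-k < k$). -/

import Mathlib

open Finset

private lemma aux_choose_pred {n j : ℕ} (h1 : 1 ≤ j) (h2 : j ≤ n) :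
    (n-1).choose (j-1) ≤ n.choose j := by
  have hn : 1 ≤ n := le_trans h1 h2
  have key : n * (n-1).choose (j-1) = n.choose j * j := by
    have := Nat.add_one_mul_choose_eq (n-1) (j-1)
    have e1 : (n-1) + 1 = n := by omega
    have e2 : (j-1) + 1 = j := by omega
    rwa [e1, e2] at this
  have h3 : (n-1).choose (j-1) * j ≤ n.choose j * j := by
    calc (n-1).choose (j-1) * j = j * (n-1).choose (j-1) := mul_comm _ _
      _ ≤ n * (n-1).choose (j-1) := Nat.mul_le_mul_right _ h2
      _ = n.choose j * j := key
  exact Nat.le_of_mul_le_mul_right h3 (by omega)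

private lemma aux_choose_lb : ∀ (j n : ℕ), 1 ≤ j → j ≤ n → n + 1 - j ≤ n.choose j := by
  intro j
  induction j with
  | zero => omega
  | succ j ih =>
    intro n _ hjn
    rcases Nat.eq_zero_or_pos j with hj | hj
    · subst hj; simp [Nat.choose_one_right]
    · have h1 : (n-1) + 1 - j ≤ (n-1).choose j := ih (n-1) hj (by omega)
      have h2 : (n-1).choose j ≤ n.choose (j+1) := by
        have := aux_choose_pred (n := n) (j := j+1) (by omega) hjn
        simpa using this
      omega

private lemma aux_telescope (r m : ℕ) :
    ∀ j, r.choose (m+1) ≤ (r-j).choose (m+1) + j * r.choose m := by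
  intro j
  induction j with
  | zero => simp
  | succ j ih =>
    have step : (r-j).choose (m+1) ≤ (r-(j+1)).choose (m+1) + r.choose m := by
      rcases Nat.eq_zero_or_pos (r - j) with h | h
      · rw [h]; simp [Nat.choose_eq_zero_of_lt (by omega : (0:ℕ) < m+1)]
      · have e : r - j = (r - (j+1)) + 1 := by omega
        rw [e, Nat.choose_succ_succ']
        have : (r-(j+1)).choose m ≤ r.choose m := Nat.choose_le_choose _ (by omega)
        omega
    calc r.choose (m+1) ≤ (r-j).choose (m+1) + j * r.choose m := ih
      _ ≤ (r-(j+1)).choose (m+1) + r.choose m + j * r.choose m := by omega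
      _ = (r-(j+1)).choose (m+1) + (j+1) * r.choose m := by ring

private lemma key_nat (k r : ℕ) (hk : 2 ≤ k) (hkr : k < r) :
    k*(r-k) + ∑ t ∈ Icc 1 (k-1), k.choose (k-t) * (r-k).choose t
      ≤ 2*k*(r.choose (k-1)) := by
  -- Vandermonde
  have hV : ∑ i ∈ range (k+1), k.choose i * (r-k).choose (k-i) = r.choose k := by
    have := Nat.add_choose_eq k (r-k) k
    rw [Nat.add_sub_cancel' (le_of_lt hkr)] at this
    rw [this, Finset.Nat.sum_antidiagonal_eq_sum_range_succ_mk]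
  -- reindex our sum
  have hre : ∑ t ∈ Icc 1 (k-1), k.choose (k-t) * (r-k).choose t
      = ∑ i ∈ Icc 1 (k-1), k.choose i * (r-k).choose (k-i) := by
    refine Finset.sum_nbij' (fun t => k - t) (fun i => k - i) ?_ ?_ ?_ ?_ ?_
    · intro t ht; simp only [mem_Icc] at ht ⊢; omega
    · intro i hi; simp only [mem_Icc] at hi ⊢; omega
    · intro t ht; rw [mem_Icc] at ht; show k - (k - t) = t; omega
    · intro i hi; rw [mem_Icc] at hi; show k - (k - i) = i; omega
    · intro t ht; rw [mem_Icc] at ht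
      show k.choose (k-t) * (r-k).choose t = k.choose (k-t) * (r-k).choose (k-(k-t))
      have h : k - (k - t) = t := by omega
      rw [h]
  -- the sum over Icc 1 (k-1) plus boundary terms is bounded by C(r,k)
  have hsub : ∑ i ∈ Icc 1 (k-1), k.choose i * (r-k).choose (k-i)
      + ((r-k).choose k + 1) ≤ r.choose k := by
    have hins : insert 0 (insert k (Icc 1 (k-1))) ⊆ range (k+1) := by
      intro x hx
      simp only [mem_insert, mem_Icc, mem_range] at hx ⊢
      omega
    have h0 : (0:ℕ) ∉ insert k (Icc 1 (k-1)) := by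
      simp only [mem_insert, mem_Icc]; omega
    have hkni : k ∉ Icc 1 (k-1) := by simp only [mem_Icc]; omega
    have := Finset.sum_le_sum_of_subset hins
      (f := fun i => k.choose i * (r-k).choose (k-i))
    rw [Finset.sum_insert h0, Finset.sum_insert hkni, hV] at this
    simp only [Nat.choose_zero_right, Nat.choose_self, Nat.sub_self, Nat.sub_zero,
      one_mul, mul_one] at this
    omega
  have htel : r.choose k ≤ (r-k).choose k + k * r.choose (k-1) := by
    have := aux_telescope r (k-1) k
    have e : k - 1 + 1 = k := by omega
    rw [e] at this
    exact this
  have hlb : r - k ≤ r.choose (k-1) := by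
    have := aux_choose_lb (k-1) r (by omega) (by omega)
    omega
  have h1 : k * (r-k) ≤ k * r.choose (k-1) := Nat.mul_le_mul_left _ hlb
  have h2 : ∑ t ∈ Icc 1 (k-1), k.choose (k-t) * (r-k).choose t + 1 ≤ k * r.choose (k-1) := by
    rw [hre]; omega
  calc k*(r-k) + ∑ t ∈ Icc 1 (k-1), k.choose (k-t) * (r-k).choose t
      ≤ k * r.choose (k-1) + k * r.choose (k-1) := by omega
    _ = 2*k*(r.choose (k-1)) := by ring
open Finset

private lemma card_superset_le {V : Type*} [Fintype V] [DecidableEq V]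
    (T : Finset V) (m : ℕ) :
    ((univ.powersetCard m).filter (fun B => T ⊆ B)).card
      ≤ (Fintype.card V).choose (m - T.card) := by
  have : ((univ.powersetCard (m - T.card) : Finset (Finset V))).card
      = (Fintype.card V).choose (m - T.card) := by
    rw [card_powersetCard, card_univ]
  rw [← this]
  apply card_le_card_of_injOn (fun B => B \ T)
  · intro B hB
    simp only [mem_coe, mem_filter, mem_powersetCard_univ] at hB ⊢
    rw [card_sdiff_of_subset hB.2, hB.1]
  · intro B hB B' hB' hEq
    simp only [coe_filter, Set.mem_setOf_eq, mem_powersetCard_univ] at hB hB'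
    have hEq' : B \ T = B' \ T := hEq
    have : B \ T ∪ T = B' \ T ∪ T := by rw [hEq']
    rwa [sdiff_union_of_subset hB.2, sdiff_union_of_subset hB'.2] at this

private lemma choose_mul_fact_le (n m : ℕ) : n.choose m * m.factorial ≤ n^m := by
  rw [mul_comm, ← Nat.descFactorial_eq_factorial_mul_choose]
  exact Nat.descFactorial_le_pow _ _

private lemma choose_mul_fact_le_real (n m : ℕ) :
    ((n.choose m : ℝ)) * (m.factorial : ℝ) ≤ (n:ℝ)^m := by
  exact_mod_cast choose_mul_fact_le n m
set_option maxHeartbeats 1600000 in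
/-- Proposition 3.2, equation (3): bounds on the number of r-cliques containing
a fixed edge in a k-uniform hypergraph with large minimum codegree. -/
theorem stmt_3 {V : Type*} [Fintype V] [DecidableEq V]
    (k r : ℕ) (hk : 2 ≤ k) (hkr : k < r) (hrn : r < Fintype.card V)
    (δ : ℝ) (hδ0 : 1/(Fintype.card V : ℝ) < δ) (hδ1 : δ < 1)
    (H : Finset (Finset V)) (hH : ∀ e ∈ H, e.card = k)
    (hcodeg : ∀ S : Finset V, S.card = k - 1 →
      (1 - δ) * (Fintype.card V : ℝ) ≤
        ((univ.filter (fun v => v ∉ S ∧ insert v S ∈ H)).card : ℝ))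
    (e : Finset V) (he : e ∈ H) :
    ((((univ.powersetCard (r - k)).filter
          (fun A : Finset V => ∀ f ∈ A.powersetCard k, f ∈ H)).card : ℝ)
        - 2*(k:ℝ)*δ*(Fintype.card V : ℝ)^(r-k)/((r-k).factorial : ℝ) * (r.choose (k-1) : ℝ)
      ≤ (((univ.powersetCard r).filter
          (fun A : Finset V => (∀ f ∈ A.powersetCard k, f ∈ H) ∧ e ⊆ A)).card : ℝ)) ∧
    ((((univ.powersetCard r).filter
          (fun A : Finset V => (∀ f ∈ A.powersetCard k, f ∈ H) ∧ e ⊆ A)).card : ℝ)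
      ≤ (((univ.powersetCard (r - k)).filter
          (fun A : Finset V => ∀ f ∈ A.powersetCard k, f ∈ H)).card : ℝ)) := by
  classical
  have hN0 : 0 < Fintype.card V := by omega
  have hek : e.card = k := hH e he
  have hkr' : k ≤ r := hkr.le
  have hNR : (0:ℝ) < (Fintype.card V : ℝ) := by exact_mod_cast hN0
  have hδpos : 0 < δ := lt_trans (div_pos one_pos hNR) hδ0
  have hδ0' : (0:ℝ) ≤ δ := le_of_lt hδpos
  have hδn1 : (1:ℝ) < δ * (Fintype.card V : ℝ) := by
    rw [div_lt_iff₀ hNR] at hδ0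
    linarith
  set Kset := (univ.powersetCard (r - k)).filter
      (fun A : Finset V => ∀ f ∈ A.powersetCard k, f ∈ H) with hKset
  set Rset := (univ.powersetCard r).filter
      (fun A : Finset V => (∀ f ∈ A.powersetCard k, f ∈ H) ∧ e ⊆ A) with hRset
  -- Upper bound (second conjunct)
  have hupper : Rset.card ≤ Kset.card := by
    apply card_le_card_of_injOn (fun A => A \ e)
    · intro A hA
      simp only [hRset, hKset, mem_coe, mem_filter, mem_powersetCard_univ] at hA ⊢
      obtain ⟨hAr, hcl, heA⟩ := hA
      refine ⟨?_, ?_⟩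
      · rw [card_sdiff_of_subset heA, hAr, hek]
      · intro f hf
        rw [mem_powersetCard] at hf
        exact hcl f (mem_powersetCard.mpr ⟨hf.1.trans sdiff_subset, hf.2⟩)
    · intro A hA B hB hAB
      simp only [hRset, mem_coe, mem_filter, mem_powersetCard_univ] at hA hB
      have hAB' : A \ e = B \ e := hAB
      have : A \ e ∪ e = B \ e ∪ e := by rw [hAB']
      rwa [sdiff_union_of_subset hA.2.2, sdiff_union_of_subset hB.2.2] at this
  refine ⟨?_, by exact_mod_cast hupper⟩
  -- Lower bound
  rw [sub_le_iff_le_add]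
  set good := Kset.filter
      (fun B => Disjoint B e ∧ ∀ f ∈ (B ∪ e).powersetCard k, f ∈ H) with hgooddef
  set bad1 := (univ.powersetCard (r-k) : Finset (Finset V)).filter
      (fun B => ¬ Disjoint B e) with hbad1def
  set bad2 := Kset.filter
      (fun B => Disjoint B e ∧ ¬ ∀ f ∈ (B ∪ e).powersetCard k, f ∈ H) with hbad2def
  set BadF := (univ.powersetCard k : Finset (Finset V)).filter
      (fun f => f ∉ H ∧ (f \ e).Nonempty ∧ (f ∩ e).Nonempty ∧ (f \ e).card ≤ r - k)
      with hBadFdef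
  -- split of Kset
  have hsplitset : Kset ⊆ good ∪ bad1 ∪ bad2 := by
    intro B hB
    have hBp : B ∈ univ.powersetCard (r-k) := (mem_filter.mp hB).1
    by_cases hd : Disjoint B e
    · by_cases hcl : ∀ f ∈ (B ∪ e).powersetCard k, f ∈ H
      · exact mem_union_left _ (mem_union_left _ (mem_filter.mpr ⟨hB, hd, hcl⟩))
      · exact mem_union_right _ (mem_filter.mpr ⟨hB, hd, hcl⟩)
    · exact mem_union_left _ (mem_union_right _ (mem_filter.mpr ⟨hBp, hd⟩))
  have hsplit : Kset.card ≤ good.card + bad1.card + bad2.card := by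
    calc Kset.card ≤ (good ∪ bad1 ∪ bad2).card := card_le_card hsplitset
      _ ≤ (good ∪ bad1).card + bad2.card := card_union_le _ _
      _ ≤ good.card + bad1.card + bad2.card := by
          have := card_union_le good bad1; omega
  -- good maps into Rset
  have hgood : good.card ≤ Rset.card := by
    apply card_le_card_of_injOn (fun B => B ∪ e)
    · intro B hB
      simp only [hgooddef, hKset, mem_coe, mem_filter, mem_powersetCard_univ] at hB
      obtain ⟨⟨hc, _⟩, hd, hcl⟩ := hB
      simp only [hRset, mem_coe, mem_filter, mem_powersetCard_univ]
      refine ⟨?_, hcl, subset_union_right⟩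
      rw [card_union_of_disjoint hd, hc, hek]
      omega
    · intro B hB B' hB' hEq
      simp only [hgooddef, hKset, mem_coe, mem_filter, mem_powersetCard_univ] at hB hB'
      have hEq' : B ∪ e = B' ∪ e := hEq
      have hdB : Disjoint B e := hB.2.1
      have hdB' : Disjoint B' e := hB'.2.1
      have : (B ∪ e) \ e = (B' ∪ e) \ e := by rw [hEq']
      rwa [union_sdiff_right, union_sdiff_right, Finset.sdiff_eq_self_iff_disjoint.mpr hdB,
        Finset.sdiff_eq_self_iff_disjoint.mpr hdB'] at this
  -- bad1 count
  have hb1 : bad1.card ≤ k * (Fintype.card V).choose (r-k-1) := by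
    have hsub : bad1 ⊆ e.biUnion
        (fun x => (univ.powersetCard (r-k)).filter (fun B => ({x} : Finset V) ⊆ B)) := by
      intro B hB
      simp only [hbad1def, mem_filter, mem_powersetCard_univ] at hB
      obtain ⟨a, haB, hae⟩ := not_disjoint_iff.mp hB.2
      exact mem_biUnion.mpr ⟨a, hae, mem_filter.mpr
        ⟨mem_powersetCard_univ.mpr hB.1, singleton_subset_iff.mpr haB⟩⟩
    calc bad1.card ≤ _ := card_le_card hsub
      _ ≤ ∑ x ∈ e, ((univ.powersetCard (r-k)).filter
            (fun B => ({x} : Finset V) ⊆ B)).card := card_biUnion_le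
      _ ≤ ∑ x ∈ e, (Fintype.card V).choose (r-k-1) := by
          refine sum_le_sum (fun x _ => ?_)
          have := card_superset_le ({x} : Finset V) (r-k)
          simpa using this
      _ = k * (Fintype.card V).choose (r-k-1) := by
          rw [sum_const, smul_eq_mul, hek]
  -- bad2 covering by bad k-sets
  have hcover : bad2 ⊆ BadF.biUnion
      (fun f => (univ.powersetCard (r-k)).filter (fun B => f \ e ⊆ B)) := by
    intro B hB
    simp only [hbad2def, hKset, mem_filter, mem_powersetCard_univ] at hB
    obtain ⟨⟨hBc, hclB⟩, hdisj, hncl⟩ := hB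
    push_neg at hncl
    obtain ⟨f, hfmem, hfH⟩ := hncl
    rw [mem_powersetCard] at hfmem
    obtain ⟨hfsub, hfc⟩ := hfmem
    have hfeB : f \ e ⊆ B := by
      intro x hx; rw [mem_sdiff] at hx
      rcases mem_union.mp (hfsub hx.1) with h | h
      · exact h
      · exact absurd h hx.2
    have hne1 : (f \ e).Nonempty := by
      rw [nonempty_iff_ne_empty]; intro hemp
      have hfe : f ⊆ e := by
        intro x hx; by_contra hxe
        exact (eq_empty_iff_forall_notMem.mp hemp x) (mem_sdiff.mpr ⟨hx, hxe⟩)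
      have : f = e := eq_of_subset_of_card_le hfe (by rw [hek, hfc])
      rw [this] at hfH; exact hfH he
    have hne2 : (f ∩ e).Nonempty := by
      rw [nonempty_iff_ne_empty]; intro hemp
      have hfB : f ⊆ B := by
        intro x hx
        rcases mem_union.mp (hfsub hx) with h | h
        · exact h
        · exact absurd (mem_inter.mpr ⟨hx, h⟩) (by rw [hemp]; exact notMem_empty x)
      exact hfH (hclB f (mem_powersetCard.mpr ⟨hfB, hfc⟩))
    have hle : (f \ e).card ≤ r - k := by
      calc (f \ e).card ≤ B.card := card_le_card hfeB
        _ = r - k := hBc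
    rw [mem_biUnion]
    refine ⟨f, ?_, mem_filter.mpr ⟨mem_powersetCard_univ.mpr hBc, hfeB⟩⟩
    simp only [hBadFdef, mem_filter, mem_powersetCard_univ]
    exact ⟨hfc, hfH, hne1, hne2, hle⟩
  have hb2a : bad2.card ≤ ∑ f ∈ BadF, (Fintype.card V).choose (r - k - (f \ e).card) := by
    calc bad2.card ≤ (BadF.biUnion
          (fun f => (univ.powersetCard (r-k)).filter (fun B => f \ e ⊆ B))).card :=
        card_le_card hcover
      _ ≤ ∑ f ∈ BadF, ((univ.powersetCard (r-k)).filter (fun B => f \ e ⊆ B)).card :=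
        card_biUnion_le
      _ ≤ ∑ f ∈ BadF, (Fintype.card V).choose (r - k - (f \ e).card) :=
        sum_le_sum (fun f _ => card_superset_le (f \ e) (r-k))
  have hmapsTT : ∀ f ∈ BadF, (f \ e).card ∈ Icc 1 (min (k-1) (r-k)) := by
    intro f hf
    simp only [hBadFdef, mem_filter, mem_powersetCard_univ] at hf
    obtain ⟨hfc, _, hne1, hne2, hle⟩ := hf
    have h1 : 1 ≤ (f \ e).card := card_pos.mpr hne1
    have h2 : (f ∩ e).card + (f \ e).card = k := by
      rw [card_inter_add_card_sdiff, hfc]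
    have h3 : 1 ≤ (f ∩ e).card := card_pos.mpr hne2
    rw [mem_Icc]
    exact ⟨h1, le_min (by omega) hle⟩
  have hfib : ∑ f ∈ BadF, (Fintype.card V).choose (r - k - (f \ e).card)
      = ∑ t ∈ Icc 1 (min (k-1) (r-k)),
          (BadF.filter (fun f => (f \ e).card = t)).card
            * (Fintype.card V).choose (r - k - t) := by
    rw [← sum_fiberwise_of_maps_to hmapsTT
      (fun f => (Fintype.card V).choose (r - k - (f \ e).card))]
    refine sum_congr rfl (fun t ht => ?_)
    have heach : ∀ f ∈ BadF.filter (fun f => (f \ e).card = t),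
        (Fintype.card V).choose (r - k - (f \ e).card)
          = (Fintype.card V).choose (r - k - t) := by
      intro f hf; rw [(mem_filter.mp hf).2]
    rw [sum_congr rfl heach, sum_const, smul_eq_mul]
  have hb2b : bad2.card ≤ ∑ t ∈ Icc 1 (min (k-1) (r-k)),
      (BadF.filter (fun f => (f \ e).card = t)).card
        * (Fintype.card V).choose (r - k - t) := by
    rw [← hfib]; exact hb2a
  -- pair counting for each t
  have hpairs : ∀ t, 1 ≤ t →
      t * (BadF.filter (fun f => (f \ e).card = t)).card
        ≤ ∑ S ∈ (univ.powersetCard (k-1)).filter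
            (fun S : Finset V => (S \ e).card = t-1),
            (univ.filter (fun v => v ∉ S ∧ insert v S ∉ H)).card := by
    intro t ht1
    calc t * (BadF.filter (fun f => (f \ e).card = t)).card
        = ∑ f ∈ BadF.filter (fun f => (f \ e).card = t), (f \ e).card := by
          rw [sum_congr rfl (fun f hf => (mem_filter.mp hf).2), sum_const,
            smul_eq_mul, mul_comm]
      _ = ((BadF.filter (fun f => (f \ e).card = t)).sigma (fun f => f \ e)).card :=
          (card_sigma _ _).symm
      _ ≤ (((univ.powersetCard (k-1)).filter
              (fun S : Finset V => (S \ e).card = t-1)).sigma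
            (fun S => univ.filter (fun v => v ∉ S ∧ insert v S ∉ H))).card := by
          apply card_le_card_of_injOn
            (fun p : (_ : Finset V) × V => (⟨p.1.erase p.2, p.2⟩ : (_ : Finset V) × V))
          · rintro ⟨f, v⟩ hp
            simp only [mem_coe, mem_sigma, hBadFdef, mem_filter, mem_powersetCard_univ,
              mem_sdiff, mem_univ, true_and] at hp ⊢
            obtain ⟨⟨⟨hfc, hfH, hne1, hne2, hler⟩, hft⟩, hvf, hve⟩ := hp
            have hsd : (f.erase v) \ e = (f \ e).erase v := by
              rw [erase_eq, erase_eq, sdiff_right_comm]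
            refine ⟨⟨?_, ?_⟩, ?_, ?_⟩
            · rw [card_erase_of_mem hvf, hfc]
            · rw [hsd, card_erase_of_mem (mem_sdiff.mpr ⟨hvf, hve⟩), hft]
            · exact notMem_erase _ _
            · rw [insert_erase hvf]; exact hfH
          · rintro ⟨f, v⟩ hp ⟨g, w⟩ hq hpq
            have hp' := mem_sigma.mp (mem_coe.mp hp)
            have hq' := mem_sigma.mp (mem_coe.mp hq)
            have hvf : v ∈ f := (mem_sdiff.mp hp'.2).1
            have hwg : w ∈ g := (mem_sdiff.mp hq'.2).1
            have hpq' : (⟨f.erase v, v⟩ : (_ : Finset V) × V) = ⟨g.erase w, w⟩ := hpq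
            obtain ⟨h1, h2⟩ := Sigma.mk.inj_iff.mp hpq'
            have hvw : v = w := eq_of_heq h2
            have hfg : f = g := by
              calc f = insert v (f.erase v) := (insert_erase hvf).symm
                _ = insert w (g.erase w) := by rw [hvw] at h1 ⊢; rw [h1]
                _ = g := insert_erase hwg
            rw [hfg, hvw]
      _ = ∑ S ∈ (univ.powersetCard (k-1)).filter
            (fun S : Finset V => (S \ e).card = t-1),
            (univ.filter (fun v => v ∉ S ∧ insert v S ∉ H)).card := card_sigma _ _
  -- cardinality of the S-sets
  have hScard : ∀ t, 1 ≤ t → t ≤ k-1 →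
      ((univ.powersetCard (k-1)).filter
          (fun S : Finset V => (S \ e).card = t-1)).card
        ≤ k.choose (k-t) * (Fintype.card V).choose (t-1) := by
    intro t ht1 htk
    have hcard : ((e.powersetCard (k-t)) ×ˢ ((univ : Finset V).powersetCard (t-1))).card
        = k.choose (k-t) * (Fintype.card V).choose (t-1) := by
      rw [card_product, card_powersetCard, card_powersetCard, card_univ, hek]
    rw [← hcard]
    apply card_le_card_of_injOn (fun S => (S ∩ e, S \ e))
    · intro S hS
      simp only [mem_coe, mem_filter, mem_powersetCard_univ] at hS
      rw [mem_coe, mem_product]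
      have hintc : (S ∩ e).card = k - t := by
        have := card_inter_add_card_sdiff S e
        omega
      exact ⟨mem_powersetCard.mpr ⟨inter_subset_right, hintc⟩,
        mem_powersetCard_univ.mpr hS.2⟩
    · intro S hS S' hS' hEq
      have h1 : S ∩ e = S' ∩ e := congrArg Prod.fst hEq
      have h2 : S \ e = S' \ e := congrArg Prod.snd hEq
      have hrec : ∀ X : Finset V, X ∩ e ∪ X \ e = X := by
        intro X; ext a
        simp only [mem_union, mem_inter, mem_sdiff]
        tauto
      rw [← hrec S, ← hrec S', h1, h2]
  -- codegree bound on bad vertices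
  have hbadv : ∀ S : Finset V, S.card = k-1 →
      ((univ.filter (fun v => v ∉ S ∧ insert v S ∉ H)).card : ℝ)
        ≤ δ * (Fintype.card V : ℝ) := by
    intro S hS
    have hdisj : Disjoint (univ.filter (fun v => v ∉ S ∧ insert v S ∉ H))
        (univ.filter (fun v => v ∉ S ∧ insert v S ∈ H)) := by
      rw [disjoint_left]; intro a ha hb
      exact (mem_filter.mp ha).2.2 ((mem_filter.mp hb).2.2)
    have hcard : (univ.filter (fun v => v ∉ S ∧ insert v S ∉ H)).card
        + (univ.filter (fun v => v ∉ S ∧ insert v S ∈ H)).card ≤ Fintype.card V := by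
      rw [← card_union_of_disjoint hdisj]
      exact (card_le_card (subset_univ _)).trans_eq card_univ
    have hcg := hcodeg S hS
    have hcR : ((univ.filter (fun v => v ∉ S ∧ insert v S ∉ H)).card : ℝ)
        + ((univ.filter (fun v => v ∉ S ∧ insert v S ∈ H)).card : ℝ)
          ≤ (Fintype.card V : ℝ) := by exact_mod_cast hcard
    linarith
  -- per-t real estimate
  have htreal : ∀ t, 1 ≤ t → t ≤ k-1 → t ≤ r-k →
      ((BadF.filter (fun f => (f \ e).card = t)).card : ℝ)
          * ((Fintype.card V).choose (r-k-t) : ℝ) * ((r-k).factorial : ℝ)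
        ≤ ((k.choose (k-t) * (r-k).choose t : ℕ) : ℝ)
            * (δ * (Fintype.card V : ℝ)^(r-k)) := by
    intro t ht1 htk htr
    have hb : ∀ S ∈ (univ.powersetCard (k-1)).filter
        (fun S : Finset V => (S \ e).card = t-1),
        ((univ.filter (fun v => v ∉ S ∧ insert v S ∉ H)).card : ℝ)
          ≤ δ * (Fintype.card V : ℝ) := by
      intro S hS
      exact hbadv S (mem_powersetCard_univ.mp (mem_filter.mp hS).1)
    have hSb : (∑ S ∈ (univ.powersetCard (k-1)).filter
          (fun S : Finset V => (S \ e).card = t-1),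
          ((univ.filter (fun v => v ∉ S ∧ insert v S ∉ H)).card : ℝ))
        ≤ (((univ.powersetCard (k-1)).filter
            (fun S : Finset V => (S \ e).card = t-1)).card : ℝ)
            * (δ * (Fintype.card V : ℝ)) := by
      simpa [nsmul_eq_mul] using sum_le_card_nsmul _ _ _ hb
    have hSc : (((univ.powersetCard (k-1)).filter
          (fun S : Finset V => (S \ e).card = t-1)).card : ℝ)
        ≤ (k.choose (k-t) : ℝ) * ((Fintype.card V).choose (t-1) : ℝ) := by
      exact_mod_cast hScard t ht1 htk
    have hδN : (0:ℝ) ≤ δ * (Fintype.card V : ℝ) := by positivity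
    have h1 : (t:ℝ) * ((BadF.filter (fun f => (f \ e).card = t)).card : ℝ)
        ≤ ((k.choose (k-t) : ℝ) * ((Fintype.card V).choose (t-1) : ℝ))
            * (δ * (Fintype.card V : ℝ)) := by
      have hpR : ((t * (BadF.filter (fun f => (f \ e).card = t)).card : ℕ) : ℝ)
          ≤ ((∑ S ∈ (univ.powersetCard (k-1)).filter
              (fun S : Finset V => (S \ e).card = t-1),
              (univ.filter (fun v => v ∉ S ∧ insert v S ∉ H)).card : ℕ) : ℝ) :=
        Nat.cast_le.mpr (hpairs t ht1)
      push_cast at hpR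
      calc (t:ℝ) * ((BadF.filter (fun f => (f \ e).card = t)).card : ℝ)
          ≤ ∑ S ∈ (univ.powersetCard (k-1)).filter
              (fun S : Finset V => (S \ e).card = t-1),
              ((univ.filter (fun v => v ∉ S ∧ insert v S ∉ H)).card : ℝ) := hpR
        _ ≤ _ := hSb
        _ ≤ _ := mul_le_mul_of_nonneg_right hSc hδN
    have htpos : (0:ℝ) < (t:ℝ) := by exact_mod_cast ht1
    refine le_of_mul_le_mul_left ?_ htpos
    have hfact1 : ((r-k).factorial : ℝ)
        = ((r-k).choose t : ℝ) * ((t:ℝ) * ((t-1).factorial : ℝ))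
            * ((r-k-t).factorial : ℝ) := by
      have ha : (r-k).choose t * t.factorial * (r-k-t).factorial = (r-k).factorial :=
        Nat.choose_mul_factorial_mul_factorial htr
      have hb2 : t * (t-1).factorial = t.factorial :=
        Nat.mul_factorial_pred (by omega)
      rw [← ha, ← hb2]
      push_cast
      ring
    have hc1 : ((Fintype.card V).choose (t-1) : ℝ) * ((t-1).factorial : ℝ)
        ≤ (Fintype.card V : ℝ)^(t-1) := choose_mul_fact_le_real _ _
    have hc2 : ((Fintype.card V).choose (r-k-t) : ℝ) * ((r-k-t).factorial : ℝ)
        ≤ (Fintype.card V : ℝ)^(r-k-t) := choose_mul_fact_le_real _ _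
    have hpow : (Fintype.card V : ℝ)^(t-1) * (Fintype.card V : ℝ)^(r-k-t)
        * (Fintype.card V : ℝ) = (Fintype.card V : ℝ)^(r-k) := by
      rw [← pow_add, ← pow_succ]
      congr 1
      omega
    have hpre : (0:ℝ) ≤ (t:ℝ) * ((k.choose (k-t):ℝ) * ((r-k).choose t : ℝ)) * δ := by
      apply mul_nonneg _ hδ0'
      positivity
    calc (t:ℝ) * (((BadF.filter (fun f => (f \ e).card = t)).card : ℝ)
          * ((Fintype.card V).choose (r-k-t) : ℝ) * ((r-k).factorial : ℝ))
        = ((t:ℝ) * ((BadF.filter (fun f => (f \ e).card = t)).card : ℝ))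
            * (((Fintype.card V).choose (r-k-t) : ℝ) * ((r-k).factorial : ℝ)) := by
          ring
      _ ≤ (((k.choose (k-t) : ℝ) * ((Fintype.card V).choose (t-1) : ℝ))
              * (δ * (Fintype.card V : ℝ)))
            * (((Fintype.card V).choose (r-k-t) : ℝ) * ((r-k).factorial : ℝ)) := by
          apply mul_le_mul_of_nonneg_right h1
          positivity
      _ = ((t:ℝ) * ((k.choose (k-t):ℝ) * ((r-k).choose t : ℝ)) * δ)
            * ((((Fintype.card V).choose (t-1) : ℝ) * ((t-1).factorial : ℝ))
              * ((((Fintype.card V).choose (r-k-t) : ℝ) * ((r-k-t).factorial : ℝ)))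
              * (Fintype.card V : ℝ)) := by
          rw [hfact1]; ring
      _ ≤ ((t:ℝ) * ((k.choose (k-t):ℝ) * ((r-k).choose t : ℝ)) * δ)
            * ((Fintype.card V : ℝ)^(t-1) * (Fintype.card V : ℝ)^(r-k-t)
              * (Fintype.card V : ℝ)) := by
          apply mul_le_mul_of_nonneg_left _ hpre
          apply mul_le_mul_of_nonneg_right _ (le_of_lt hNR)
          exact mul_le_mul hc1 hc2 (by positivity) (by positivity)
      _ = (t:ℝ) * (((k.choose (k-t) * (r-k).choose t : ℕ) : ℝ)
            * (δ * (Fintype.card V : ℝ)^(r-k))) := by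
          rw [hpow]; push_cast; ring
  -- bad1 real estimate
  have hB1real : (bad1.card : ℝ) * ((r-k).factorial : ℝ)
      ≤ ((k * (r-k) : ℕ) : ℝ) * (δ * (Fintype.card V : ℝ)^(r-k)) := by
    have hb1R : (bad1.card : ℝ) ≤ (k:ℝ) * ((Fintype.card V).choose (r-k-1) : ℝ) := by
      exact_mod_cast hb1
    have hfac : ((r-k).factorial : ℝ) = ((r-k : ℕ):ℝ) * ((r-k-1).factorial : ℝ) := by
      exact_mod_cast (Nat.mul_factorial_pred (by omega : r-k ≠ 0)).symm
    have hc : ((Fintype.card V).choose (r-k-1) : ℝ) * ((r-k-1).factorial : ℝ)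
        ≤ (Fintype.card V : ℝ)^(r-k-1) := choose_mul_fact_le_real _ _
    have hpow2 : (Fintype.card V : ℝ)^(r-k-1) * (Fintype.card V : ℝ)
        = (Fintype.card V : ℝ)^(r-k) := by
      rw [← pow_succ]
      congr 1
      omega
    have h1n : (1:ℝ) ≤ δ * (Fintype.card V : ℝ) := le_of_lt hδn1
    calc (bad1.card : ℝ) * ((r-k).factorial : ℝ)
        ≤ ((k:ℝ) * ((Fintype.card V).choose (r-k-1) : ℝ)) * ((r-k).factorial : ℝ) := by
          apply mul_le_mul_of_nonneg_right hb1R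
          positivity
      _ = ((k:ℝ) * ((r-k : ℕ):ℝ))
            * (((Fintype.card V).choose (r-k-1) : ℝ) * ((r-k-1).factorial : ℝ)) := by
          rw [hfac]; ring
      _ ≤ ((k:ℝ) * ((r-k : ℕ):ℝ)) * (Fintype.card V : ℝ)^(r-k-1) := by
          apply mul_le_mul_of_nonneg_left hc
          positivity
      _ ≤ ((k:ℝ) * ((r-k : ℕ):ℝ))
            * ((Fintype.card V : ℝ)^(r-k-1) * (δ * (Fintype.card V : ℝ))) := by
          apply mul_le_mul_of_nonneg_left _ (by positivity)
          exact le_mul_of_one_le_right (by positivity) h1n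
      _ = ((k * (r-k) : ℕ) : ℝ) * (δ * (Fintype.card V : ℝ)^(r-k)) := by
          rw [← hpow2]; push_cast; ring
  -- bad2 real estimate
  have hδNpow : (0:ℝ) ≤ δ * (Fintype.card V : ℝ)^(r-k) := by positivity
  have hB2real : (bad2.card : ℝ) * ((r-k).factorial : ℝ)
      ≤ ((∑ t ∈ Icc 1 (k-1), k.choose (k-t) * (r-k).choose t : ℕ) : ℝ)
          * (δ * (Fintype.card V : ℝ)^(r-k)) := by
    have hb2R : (bad2.card : ℝ) ≤ ∑ t ∈ Icc 1 (min (k-1) (r-k)),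
        ((BadF.filter (fun f => (f \ e).card = t)).card : ℝ)
          * ((Fintype.card V).choose (r - k - t) : ℝ) := by
      have := (Nat.cast_le (α := ℝ)).mpr hb2b
      push_cast at this
      exact this
    calc (bad2.card : ℝ) * ((r-k).factorial : ℝ)
        ≤ (∑ t ∈ Icc 1 (min (k-1) (r-k)),
            ((BadF.filter (fun f => (f \ e).card = t)).card : ℝ)
              * ((Fintype.card V).choose (r - k - t) : ℝ)) * ((r-k).factorial : ℝ) := by
          apply mul_le_mul_of_nonneg_right hb2R
          positivity
      _ = ∑ t ∈ Icc 1 (min (k-1) (r-k)),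
            ((BadF.filter (fun f => (f \ e).card = t)).card : ℝ)
              * ((Fintype.card V).choose (r - k - t) : ℝ) * ((r-k).factorial : ℝ) := by
          rw [sum_mul]
      _ ≤ ∑ t ∈ Icc 1 (min (k-1) (r-k)),
            ((k.choose (k-t) * (r-k).choose t : ℕ) : ℝ)
              * (δ * (Fintype.card V : ℝ)^(r-k)) := by
          refine sum_le_sum (fun t ht => ?_)
          rw [mem_Icc] at ht
          exact htreal t ht.1 (le_trans ht.2 (min_le_left _ _))
            (le_trans ht.2 (min_le_right _ _))
      _ = ((∑ t ∈ Icc 1 (min (k-1) (r-k)), k.choose (k-t) * (r-k).choose t : ℕ) : ℝ)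
            * (δ * (Fintype.card V : ℝ)^(r-k)) := by
          rw [← sum_mul]
          push_cast
          ring
      _ ≤ ((∑ t ∈ Icc 1 (k-1), k.choose (k-t) * (r-k).choose t : ℕ) : ℝ)
            * (δ * (Fintype.card V : ℝ)^(r-k)) := by
          apply mul_le_mul_of_nonneg_right _ hδNpow
          exact_mod_cast (Nat.cast_le (α := ℝ)).mpr
            (sum_le_sum_of_subset (Icc_subset_Icc_right (min_le_left _ _)))
  -- assemble
  have hsplitR : (Kset.card : ℝ) ≤ (Rset.card : ℝ) + (bad1.card : ℝ) + (bad2.card : ℝ) := by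
    have hN : Kset.card ≤ Rset.card + bad1.card + bad2.card := by omega
    exact_mod_cast hN
  have hFpos : (0:ℝ) < ((r-k).factorial : ℝ) := by
    exact_mod_cast (r-k).factorial_pos
  have hkey : ((k*(r-k) + ∑ t ∈ Icc 1 (k-1), k.choose (k-t) * (r-k).choose t : ℕ) : ℝ)
      ≤ ((2*k*(r.choose (k-1)) : ℕ) : ℝ) :=
    Nat.cast_le.mpr (key_nat k r hk hkr)
  have hcomb : ((k * (r-k) : ℕ) : ℝ) * (δ * (Fintype.card V : ℝ)^(r-k))
      + ((∑ t ∈ Icc 1 (k-1), k.choose (k-t) * (r-k).choose t : ℕ) : ℝ)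
          * (δ * (Fintype.card V : ℝ)^(r-k))
      ≤ ((2*k*(r.choose (k-1)) : ℕ) : ℝ) * (δ * (Fintype.card V : ℝ)^(r-k)) := by
    have h := mul_le_mul_of_nonneg_right hkey hδNpow
    calc ((k * (r-k) : ℕ) : ℝ) * (δ * (Fintype.card V : ℝ)^(r-k))
        + ((∑ t ∈ Icc 1 (k-1), k.choose (k-t) * (r-k).choose t : ℕ) : ℝ)
            * (δ * (Fintype.card V : ℝ)^(r-k))
        = ((k*(r-k) + ∑ t ∈ Icc 1 (k-1), k.choose (k-t) * (r-k).choose t : ℕ) : ℝ)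
            * (δ * (Fintype.card V : ℝ)^(r-k)) := by push_cast; ring
      _ ≤ _ := h
  have hs : (Kset.card : ℝ) * ((r-k).factorial : ℝ)
      ≤ (Rset.card : ℝ) * ((r-k).factorial : ℝ)
        + (bad1.card : ℝ) * ((r-k).factorial : ℝ)
        + (bad2.card : ℝ) * ((r-k).factorial : ℝ) := by
    have := mul_le_mul_of_nonneg_right hsplitR (le_of_lt hFpos)
    rw [add_mul, add_mul] at this
    exact this
  have hM : (Kset.card : ℝ) * ((r-k).factorial : ℝ)
      ≤ (Rset.card : ℝ) * ((r-k).factorial : ℝ)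
        + ((2*k*(r.choose (k-1)) : ℕ) : ℝ) * (δ * (Fintype.card V : ℝ)^(r-k)) := by
    linarith [hs, hB1real, hB2real, hcomb]
  rw [← sub_le_iff_le_add']
  have hallow : 2*(k:ℝ)*δ*(Fintype.card V : ℝ)^(r-k)/((r-k).factorial : ℝ)
        * (r.choose (k-1) : ℝ)
      = ((2*k*(r.choose (k-1)) : ℕ) : ℝ) * (δ * (Fintype.card V : ℝ)^(r-k))
          / ((r-k).factorial : ℝ) := by
    push_cast
    ring
  rw [hallow, le_div_iff₀ hFpos, sub_mul]
  linarith [hM]
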